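/- Let n = 2m, let t be a non-negative integer, let K = { y ∈ F_{2^n} : y^{2^m} = y } be the subfield F_{2^m}, let π : K → K be a bijection, let g : K → F_2, and let λ ∈ F_{2^n} be nonzero. Then the function f(x) = Tr(λ x^{2^t} π(x + x^{2^m})) + g(x + x^{2^m}) is bent on F_{2^n} if and only if λ ∉ K (equivalently, λ + λ^{2^m} ≠ 0). (Note x + x^{2^m} ∈ K for every x ∈ F_{2^n}.) -/

import Mathlib

noncomputable section

noncomputable instance (n : ℕ) : Fintype (GaloisField 2 n) := Fintype.ofFinite _

/-- `(-1)^c` for `c ∈ F_2`. -/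
def sgn (c : ZMod 2) : ℤ := if c = 0 then 1 else -1

/-- The absolute trace `Tr : F_{2^n} → F_2`. -/
def Tr {n : ℕ} (x : GaloisField 2 n) : ZMod 2 :=
  Algebra.trace (ZMod 2) (GaloisField 2 n) x

/-- Walsh–Hadamard transform of a Boolean function on `F_{2^n}`. -/
def walsh {n : ℕ} (f : GaloisField 2 n → ZMod 2) (μ : GaloisField 2 n) : ℤ :=
  ∑ x : GaloisField 2 n, sgn (f x + Tr (μ * x))

/-- `f` is bent (where `n = 2m`): all Walsh coefficients are `±2^m`. -/
def IsBent {n : ℕ} (m : ℕ) (f : GaloisField 2 n → ZMod 2) : Prop :=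
  ∀ μ, walsh f μ = 2 ^ m ∨ walsh f μ = -(2 ^ m)

/-- `fs` is the dual of the bent function `f` (where `n = 2m`). -/
def IsDualOf {n : ℕ} (m : ℕ) (fs f : GaloisField 2 n → ZMod 2) : Prop :=
  ∀ μ, walsh f μ = 2 ^ m * sgn (fs μ)


namespace BentAux
attribute [local instance] Classical.propDecidable
set_option linter.unusedSectionVars false

variable {n : ℕ}

lemma sgn_add (a b : ZMod 2) : sgn (a + b) = sgn a * sgn b := by revert a b; decide

lemma sgn_cases (a : ZMod 2) : sgn a = 1 ∨ sgn a = -1 := by revert a; decide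

lemma tr_add (x y : GaloisField 2 n) : Tr (x + y) = Tr x + Tr y :=
  map_add (Algebra.trace (ZMod 2) (GaloisField 2 n)) x y

def frobAlg (n : ℕ) : GaloisField 2 n ≃ₐ[ZMod 2] GaloisField 2 n :=
  AlgEquiv.ofRingEquiv (f := frobeniusEquiv (GaloisField 2 n) 2)
    (fun c => by
      have hc : c ^ 2 = c := by revert c; decide
      show (algebraMap (ZMod 2) (GaloisField 2 n) c) ^ 2 = _
      rw [← map_pow, hc])

lemma tr_sq (x : GaloisField 2 n) : Tr (x ^ 2) = Tr x :=
  Algebra.trace_eq_of_algEquiv (frobAlg n) x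

lemma tr_two_pow (j : ℕ) (x : GaloisField 2 n) : Tr (x ^ 2 ^ j) = Tr x := by
  induction j with
  | zero => rw [pow_zero, pow_one]
  | succ j ih => rw [pow_succ, pow_mul, tr_sq, ih]

lemma pow_card' (hn : n ≠ 0) (x : GaloisField 2 n) : x ^ 2 ^ n = x := by
  have := FiniteField.pow_card x
  rwa [← Nat.card_eq_fintype_card, GaloisField.card 2 n hn] at this

lemma pow_n_mul (hn : n ≠ 0) (j : ℕ) (x : GaloisField 2 n) : x ^ 2 ^ (n * j) = x := by
  induction j with
  | zero => simp
  | succ j ih =>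
      rw [Nat.mul_succ, pow_add, pow_mul, ih, pow_card' hn]

lemma add_eq_zero_iff (x y : GaloisField 2 n) : x + y = 0 ↔ x = y := by
  rw [← CharTwo.sub_eq_add, sub_eq_zero]

lemma add_pow2 (j : ℕ) (x y : GaloisField 2 n) : (x + y) ^ 2 ^ j = x ^ 2 ^ j + y ^ 2 ^ j :=
  add_pow_char_pow (p := 2) ..

lemma pow_pow_inj (j : ℕ) {x y : GaloisField 2 n} (h : x ^ 2 ^ j = y ^ 2 ^ j) : x = y := by
  have h2 : (x + y) ^ 2 ^ j = 0 := by
    rw [add_pow2, h, CharTwo.add_self_eq_zero]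
  rw [← add_eq_zero_iff]
  exact pow_eq_zero_iff (pow_ne_zero j two_ne_zero) |>.mp h2

/-- The subfield `F_{2^m}` as a finset. -/
def Kf (n m : ℕ) : Finset (GaloisField 2 n) :=
  Finset.univ.filter (fun y => y ^ 2 ^ m = y)

lemma mem_Kf {m : ℕ} {y : GaloisField 2 n} : y ∈ Kf n m ↔ y ^ 2 ^ m = y := by
  simp [Kf]

/-- relative trace to the subfield -/
def Tl (n m : ℕ) (x : GaloisField 2 n) : GaloisField 2 n := x + x ^ 2 ^ m

lemma Tl_add {m : ℕ} (x y : GaloisField 2 n) :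
    Tl n m (x + y) = Tl n m x + Tl n m y := by
  simp only [Tl, add_pow2]; ring

lemma Kf_mul {m : ℕ} {x y : GaloisField 2 n} (hx : x ∈ Kf n m) (hy : y ∈ Kf n m) :
    x * y ∈ Kf n m := by
  rw [mem_Kf] at *
  rw [mul_pow, hx, hy]

lemma Kf_pow2 {m : ℕ} {x : GaloisField 2 n} (hx : x ∈ Kf n m) (j : ℕ) :
    x ^ 2 ^ j ∈ Kf n m := by
  rw [mem_Kf] at *
  rw [← pow_mul, mul_comm, pow_mul, hx]

lemma Kf_add {m : ℕ} {x y : GaloisField 2 n} (hx : x ∈ Kf n m) (hy : y ∈ Kf n m) :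
    x + y ∈ Kf n m := by
  rw [mem_Kf] at *
  rw [add_pow2, hx, hy]

section mn
variable {m : ℕ} (hn : n = 2 * m) (hm : m ≠ 0)
include hn hm

lemma pow_qq (x : GaloisField 2 n) : (x ^ 2 ^ m) ^ 2 ^ m = x := by
  rw [← pow_mul, ← pow_add]
  have : m + m = n := by omega
  rw [this, pow_card' (by omega)]

lemma Tl_mem_Kf (x : GaloisField 2 n) : Tl n m x ∈ Kf n m := by
  rw [mem_Kf, Tl, add_pow2, pow_qq hn hm]
  ring

lemma Tl_eq_zero_iff (x : GaloisField 2 n) : Tl n m x = 0 ↔ x ∈ Kf n m := by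
  rw [Tl, add_eq_zero_iff, mem_Kf, eq_comm]

lemma card_F : Fintype.card (GaloisField 2 n) = 2 ^ m * 2 ^ m := by
  rw [← Nat.card_eq_fintype_card, GaloisField.card 2 n (by omega), hn, two_mul, pow_add]

lemma Kf_card_le : (Kf n m).card ≤ 2 ^ m := by
  classical
  set P : Polynomial (GaloisField 2 n) := Polynomial.X ^ 2 ^ m - Polynomial.X with hP
  have h2m : 2 ≤ 2 ^ m := by
    calc 2 = 2 ^ 1 := (pow_one 2).symm
    _ ≤ 2 ^ m := Nat.pow_le_pow_right (by norm_num) (by omega)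
  have hP0 : P ≠ 0 := by
    intro h
    have h1 : P.coeff (2 ^ m) = 1 := by
      simp [hP, Polynomial.coeff_X_pow, Polynomial.coeff_X]
      omega
    rw [h] at h1
    simp at h1
  have hsub : Kf n m ⊆ P.roots.toFinset := by
    intro y hy
    rw [Multiset.mem_toFinset, Polynomial.mem_roots hP0]
    simp only [Polynomial.IsRoot, hP, Polynomial.eval_sub, Polynomial.eval_pow,
      Polynomial.eval_X, sub_eq_zero]
    exact mem_Kf.mp hy
  calc (Kf n m).card ≤ P.roots.toFinset.card := Finset.card_le_card hsub
    _ ≤ Multiset.card P.roots := Multiset.toFinset_card_le _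
    _ ≤ P.natDegree := Polynomial.card_roots' P
    _ ≤ 2 ^ m := by
        apply le_trans (Polynomial.natDegree_sub_le _ _)
        simp [Polynomial.natDegree_X_pow, Polynomial.natDegree_X]
        omega

lemma fiber_eq (x0 : GaloisField 2 n) :
    Finset.univ.filter (fun x => Tl n m x = Tl n m x0) =
      (Kf n m).image (fun k => x0 + k) := by
  ext x
  simp only [Finset.mem_filter, Finset.mem_univ, true_and, Finset.mem_image]
  constructor
  · intro h
    refine ⟨x0 + x, ?_, by rw [← add_assoc, CharTwo.add_self_eq_zero, zero_add]⟩
    rw [← Tl_eq_zero_iff hn hm, Tl_add, h, CharTwo.add_self_eq_zero]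
  · rintro ⟨k, hk, rfl⟩
    rw [Tl_add, (Tl_eq_zero_iff hn hm k).mpr hk, add_zero]

lemma image_Tl_eq :
    Finset.univ.image (Tl n m) = Kf n m ∧ (Kf n m).card = 2 ^ m := by
  classical
  set R := Finset.univ.image (Tl n m) with hR
  have hsub : R ⊆ Kf n m := by
    intro c hc
    rw [hR, Finset.mem_image] at hc
    obtain ⟨x, -, rfl⟩ := hc
    exact Tl_mem_Kf hn hm x
  have hfib : ∀ c ∈ R, (Finset.univ.filter (fun x => Tl n m x = c)).card = (Kf n m).card := by
    intro c hc
    rw [hR, Finset.mem_image] at hc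
    obtain ⟨x0, -, rfl⟩ := hc
    rw [fiber_eq hn hm x0, Finset.card_image_of_injective _ (add_right_injective x0)]
  have hcount : Fintype.card (GaloisField 2 n) = R.card * (Kf n m).card := by
    rw [← Finset.card_univ,
      Finset.card_eq_sum_card_fiberwise (f := Tl n m) (t := R)
        (fun x _ => Finset.mem_image_of_mem _ (Finset.mem_univ x)),
      Finset.sum_congr rfl hfib, Finset.sum_const, smul_eq_mul]
  rw [card_F hn hm] at hcount
  have hKle := Kf_card_le hn hm
  have hRle : R.card ≤ (Kf n m).card := Finset.card_le_card hsub
  have hKcard : (Kf n m).card = 2 ^ m := by nlinarith [hcount, hKle, hRle]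
  refine ⟨?_, hKcard⟩
  have hRcard : R.card = (Kf n m).card := by nlinarith [hcount, hKle, hRle]
  exact Finset.eq_of_subset_of_card_le hsub (le_of_eq hRcard.symm)

lemma Kf_card : (Kf n m).card = 2 ^ m := (image_Tl_eq hn hm).2

lemma Tl_surj {c : GaloisField 2 n} (hc : c ∈ Kf n m) : ∃ x, Tl n m x = c := by
  have := (image_Tl_eq hn hm).1
  rw [← this, Finset.mem_image] at hc
  obtain ⟨x, -, hx⟩ := hc
  exact ⟨x, hx⟩

lemma tr_Tl (x : GaloisField 2 n) : Tr (Tl n m x) = 0 := by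
  rw [Tl, tr_add, tr_two_pow, CharTwo.add_self_eq_zero]

lemma tr_Kf {c : GaloisField 2 n} (hc : c ∈ Kf n m) : Tr c = 0 := by
  obtain ⟨x, rfl⟩ := Tl_surj hn hm hc
  exact tr_Tl hn hm x

lemma annihilator (β : GaloisField 2 n) :
    (∀ k ∈ Kf n m, Tr (β * k) = 0) ↔ β ∈ Kf n m := by
  constructor
  · intro h
    have key : ∀ x : GaloisField 2 n, Tr ((β + β ^ 2 ^ m) * x) = 0 := by
      intro x
      have h1 : Tr (β * Tl n m x) = 0 := h _ (Tl_mem_Kf hn hm x)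
      have h2 : Tr (β * x ^ 2 ^ m) = Tr (β ^ 2 ^ m * x) := by
        rw [← tr_two_pow m (β ^ 2 ^ m * x), mul_pow, pow_qq hn hm]
      rw [Tl, mul_add, tr_add, h2] at h1
      rw [add_mul, tr_add]
      exact h1
    have hζ : β + β ^ 2 ^ m = 0 := by
      by_contra hne
      have htr := (traceForm_nondegenerate (ZMod 2) (GaloisField 2 n)).1 (β + β ^ 2 ^ m)
      exact hne (htr (fun y => by rw [Algebra.traceForm_apply]; exact key y))
    rw [mem_Kf, ← (add_eq_zero_iff β (β ^ 2 ^ m)).mp hζ]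
  · intro hβ k hk
    exact tr_Kf hn hm (Kf_mul hβ hk)

lemma char_sum (β : GaloisField 2 n) :
    ∑ k ∈ Kf n m, sgn (Tr (β * k)) = if β ∈ Kf n m then (2 ^ m : ℤ) else 0 := by
  classical
  by_cases hβ : β ∈ Kf n m
  · rw [if_pos hβ]
    have h0 := (annihilator hn hm β).mpr hβ
    rw [Finset.sum_congr rfl (fun k hk => by rw [h0 k hk])]
    simp [sgn, Kf_card hn hm]
  · rw [if_neg hβ]
    obtain ⟨k0, hk0K, hk0⟩ : ∃ k0 ∈ Kf n m, Tr (β * k0) ≠ 0 := by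
      by_contra h
      push_neg at h
      exact hβ ((annihilator hn hm β).mp h)
    have hk01 : Tr (β * k0) = 1 := by
      have : ∀ a : ZMod 2, a ≠ 0 → a = 1 := by decide
      exact this _ hk0
    have himg : (Kf n m).image (fun k => k + k0) = Kf n m := by
      apply Finset.eq_of_subset_of_card_le
      · intro y hy
        rw [Finset.mem_image] at hy
        obtain ⟨k, hk, rfl⟩ := hy
        exact Kf_add hk hk0K
      · rw [Finset.card_image_of_injective _ (add_left_injective k0)]
    have hre : ∑ k ∈ Kf n m, sgn (Tr (β * k)) =
        ∑ k ∈ Kf n m, sgn (Tr (β * (k + k0))) := by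
      conv_lhs => rw [← himg]
      rw [Finset.sum_image (fun a _ b _ h => add_left_injective k0 h)]
    have hneg : ∑ k ∈ Kf n m, sgn (Tr (β * (k + k0))) =
        -∑ k ∈ Kf n m, sgn (Tr (β * k)) := by
      rw [← Finset.sum_neg_distrib]
      apply Finset.sum_congr rfl
      intro k hk
      rw [mul_add, tr_add, sgn_add, hk01]
      simp [sgn]
    have := hre.trans hneg
    linarith

end mn

theorem main {n m : ℕ} (hn : n = 2 * m) (hm : m ≠ 0) (t : ℕ)
    (π : GaloisField 2 n → GaloisField 2 n)
    (hπ : Set.BijOn π {y : GaloisField 2 n | y ^ (2 ^ m) = y}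
      {y : GaloisField 2 n | y ^ (2 ^ m) = y})
    (g : GaloisField 2 n → ZMod 2)
    (lam : GaloisField 2 n) :
    IsBent m (fun x => Tr (lam * x ^ (2 ^ t) * π (x + x ^ (2 ^ m))) + g (x + x ^ (2 ^ m))) ↔
      lam ∉ {y : GaloisField 2 n | y ^ (2 ^ m) = y} := by
  classical
  set f : GaloisField 2 n → ZMod 2 :=
    fun x => Tr (lam * x ^ (2 ^ t) * π (x + x ^ (2 ^ m))) + g (x + x ^ (2 ^ m)) with hf
  have hπK : ∀ c ∈ Kf n m, π c ∈ Kf n m := fun c hc => mem_Kf.mpr (hπ.mapsTo (mem_Kf.mp hc))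
  set s : ℕ := n * t - t with hs_def
  have hs : ∀ y : GaloisField 2 n, (y ^ 2 ^ s) ^ 2 ^ t = y := by
    intro y
    rw [← pow_mul, ← pow_add]
    have h1 : s + t = n * t := by
      have ht : t ≤ n * t := Nat.le_mul_of_pos_left t (by omega)
      omega
    rw [h1, pow_n_mul (by omega)]
  set ψ : GaloisField 2 n → GaloisField 2 n := fun c => (lam * π c) ^ 2 ^ s with hψ
  have hexists : ∀ c : GaloisField 2 n, ∃ x, c ∈ Kf n m → Tl n m x = c := by
    intro c
    by_cases hc : c ∈ Kf n m
    · obtain ⟨x, hx⟩ := Tl_surj hn hm hc; exact ⟨x, fun _ => hx⟩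
    · exact ⟨0, fun h => absurd h hc⟩
  choose x0 hx0 using hexists
  have hTldef : ∀ x : GaloisField 2 n, x + x ^ 2 ^ m = Tl n m x := fun _ => rfl
  -- pointwise key
  have hkey : ∀ (μ x' k : GaloisField 2 n), k ∈ Kf n m →
      f (x' + k) + Tr (μ * (x' + k)) =
        (f x' + Tr (μ * x')) + Tr ((ψ (Tl n m x') + μ) * k) := by
    intro μ x' k hk
    have hTl : Tl n m (x' + k) = Tl n m x' := by
      rw [Tl_add, (Tl_eq_zero_iff hn hm k).mpr hk, add_zero]
    have htrk : Tr (ψ (Tl n m x') * k) = Tr (lam * k ^ 2 ^ t * π (Tl n m x')) := by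
      rw [← tr_two_pow t (ψ (Tl n m x') * k)]
      congr 1
      rw [hψ, mul_pow, hs]
      ring
    have hxk : (x' + k) ^ 2 ^ t = x' ^ 2 ^ t + k ^ 2 ^ t := add_pow2 t x' k
    simp only [hf, hTldef, hTl, hxk]
    rw [show lam * (x' ^ 2 ^ t + k ^ 2 ^ t) * π (Tl n m x') =
        lam * x' ^ 2 ^ t * π (Tl n m x') + lam * k ^ 2 ^ t * π (Tl n m x') by ring,
      tr_add, show μ * (x' + k) = μ * x' + μ * k by ring, tr_add,
      add_mul, tr_add, htrk]
    ring
  -- main walsh formula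
  have hW : ∀ μ, walsh f μ = ∑ c ∈ Kf n m,
      sgn (f (x0 c) + Tr (μ * x0 c)) *
        (if ((lam + lam ^ 2 ^ m) * π c) ^ 2 ^ s = Tl n m μ then ((2:ℤ) ^ m) else 0) := by
    intro μ
    rw [walsh, ← Finset.sum_fiberwise_of_maps_to (g := Tl n m) (t := Kf n m)
      (fun x _ => Tl_mem_Kf hn hm x)]
    apply Finset.sum_congr rfl
    intro c hc
    have hfib : Finset.univ.filter (fun x => Tl n m x = c) =
        (Kf n m).image (fun k => x0 c + k) := by
      conv_lhs => rw [← hx0 c hc]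
      exact fiber_eq hn hm (x0 c)
    rw [hfib, Finset.sum_image (fun a _ b _ h => add_right_injective _ h)]
    have hterm : ∀ k ∈ Kf n m, sgn (f (x0 c + k) + Tr (μ * (x0 c + k))) =
        sgn (f (x0 c) + Tr (μ * x0 c)) * sgn (Tr ((ψ c + μ) * k)) := by
      intro k hk
      rw [hkey μ (x0 c) k hk, hx0 c hc, sgn_add]
    rw [Finset.sum_congr rfl hterm, ← Finset.mul_sum, char_sum hn hm (ψ c + μ)]
    have hψc : ψ c ^ 2 ^ m = (lam ^ 2 ^ m * π c) ^ 2 ^ s := by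
      rw [hψ, ← pow_mul, mul_comm (2 ^ s) (2 ^ m), pow_mul, mul_pow,
        mem_Kf.mp (hπK c hc)]
    have hcond : (ψ c + μ ∈ Kf n m) ↔
        (((lam + lam ^ 2 ^ m) * π c) ^ 2 ^ s = Tl n m μ) := by
      rw [← Tl_eq_zero_iff hn hm, Tl_add, add_eq_zero_iff]
      have : Tl n m (ψ c) = ((lam + lam ^ 2 ^ m) * π c) ^ 2 ^ s := by
        rw [Tl, hψc, hψ, ← add_pow2]
        congr 1
        ring
      rw [this]
    simp only [hcond]
  have hq_pos : (0:ℤ) < 2 ^ m := by positivity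
  constructor
  · -- bent → lam ∉ K
    intro hbent hlamK
    have hlam0 : lam + lam ^ 2 ^ m = 0 := by
      rw [Set.mem_setOf_eq] at hlamK
      rw [hlamK, CharTwo.add_self_eq_zero]
    obtain ⟨μ, hμ⟩ : ∃ μ : GaloisField 2 n, μ ∉ Kf n m := by
      by_contra h
      push_neg at h
      have huniv : Kf n m = Finset.univ := Finset.eq_univ_iff_forall.mpr h
      have h1 := Kf_card hn hm
      rw [huniv, Finset.card_univ, card_F hn hm] at h1
      have h2m : 2 ≤ 2 ^ m := by
        calc 2 = 2 ^ 1 := (pow_one 2).symm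
        _ ≤ 2 ^ m := Nat.pow_le_pow_right (by norm_num) (by omega)
      nlinarith
    have hTlμ : Tl n m μ ≠ 0 := fun h => hμ ((Tl_eq_zero_iff hn hm μ).mp h)
    have hzero : walsh f μ = 0 := by
      rw [hW μ]
      apply Finset.sum_eq_zero
      intro c hc
      rw [if_neg, mul_zero]
      rw [hlam0, zero_mul, zero_pow (by positivity)]
      exact fun h => hTlμ h.symm
    rcases hbent μ with h | h <;> rw [hzero] at h <;> linarith
  · -- lam ∉ K → bent
    intro hlam μ
    set A : GaloisField 2 n := lam + lam ^ 2 ^ m with hA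
    have hA0 : A ≠ 0 := by
      intro h
      exact hlam (Set.mem_setOf_eq ▸ ((add_eq_zero_iff _ _).mp h).symm)
    have hAK : A ∈ Kf n m := Tl_mem_Kf hn hm lam
    set η : GaloisField 2 n → GaloisField 2 n := fun c => (A * π c) ^ 2 ^ s with hη
    have hηK : ∀ c ∈ Kf n m, η c ∈ Kf n m := fun c hc =>
      Kf_pow2 (Kf_mul hAK (hπK c hc)) s
    have hηinj : ∀ c1 ∈ Kf n m, ∀ c2 ∈ Kf n m, η c1 = η c2 → c1 = c2 := by
      intro c1 hc1 c2 hc2 h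
      have h1 : A * π c1 = A * π c2 := pow_pow_inj s h
      exact hπ.injOn (mem_Kf.mp hc1) (mem_Kf.mp hc2) (mul_left_cancel₀ hA0 h1)
    have himg : (Kf n m).image η = Kf n m := by
      apply Finset.eq_of_subset_of_card_le
      · intro y hy
        rw [Finset.mem_image] at hy
        obtain ⟨c, hc, rfl⟩ := hy
        exact hηK c hc
      · rw [Finset.card_image_of_injOn hηinj]
    obtain ⟨c0, hc0, hc0η⟩ : ∃ c0 ∈ Kf n m, η c0 = Tl n m μ := by
      have : Tl n m μ ∈ (Kf n m).image η := by rw [himg]; exact Tl_mem_Kf hn hm μ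
      rw [Finset.mem_image] at this
      exact this
    have hval : walsh f μ = sgn (f (x0 c0) + Tr (μ * x0 c0)) * 2 ^ m := by
      rw [hW μ]
      rw [Finset.sum_eq_single_of_mem c0 hc0]
      · rw [if_pos hc0η]
      · intro c hc hne
        rw [if_neg, mul_zero]
        intro h
        exact hne (hηinj c hc c0 hc0 (h.trans hc0η.symm))
    rcases sgn_cases (f (x0 c0) + Tr (μ * x0 c0)) with h | h <;> rw [hval, h]
    · left; rw [one_mul]
    · right; rw [neg_one_mul]

end BentAux

lemma BentAux.walsh_even {n : ℕ} (f : GaloisField 2 n → ZMod 2) (μ : GaloisField 2 n) :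
    walsh f μ % 2 = 0 := by
  have h1 : ∀ a : ZMod 2, sgn a % 2 = 1 := by decide
  rw [walsh, Finset.sum_int_mod]
  simp only [h1]
  rw [Finset.sum_const, Finset.card_univ, nsmul_eq_mul, mul_one]
  have h3 : Fintype.card (GaloisField 2 n) = 2 ^ Module.finrank (ZMod 2) (GaloisField 2 n) := by
    have := Module.card_eq_pow_finrank (K := ZMod 2) (V := GaloisField 2 n)
    rwa [ZMod.card] at this
  have h4 : Module.finrank (ZMod 2) (GaloisField 2 n) ≠ 0 := by
    intro h
    rw [h, pow_zero] at h3
    have := Fintype.one_lt_card (α := GaloisField 2 n)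
    omega
  rw [h3]
  obtain ⟨k, hk⟩ := Nat.exists_eq_succ_of_ne_zero h4
  rw [hk, pow_succ]
  push_cast
  exact Int.mul_emod_left _ _

/-- Maiorana–MacFarland type: `f(x) = Tr(λ x^{2^t} π(x+x^{2^m})) + g(x+x^{2^m})` is bent iff
`λ ∉ K`, where `K = F_{2^m}` is the subfield and `π` is a bijection of `K`. -/
theorem statement15 {n m : ℕ} (hn : n = 2 * m) (t : ℕ)
    (π : GaloisField 2 n → GaloisField 2 n)
    (hπ : Set.BijOn π {y : GaloisField 2 n | y ^ (2 ^ m) = y}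
      {y : GaloisField 2 n | y ^ (2 ^ m) = y})
    (g : GaloisField 2 n → ZMod 2)
    (lam : GaloisField 2 n) (hlam : lam ≠ 0) :
    IsBent m (fun x => Tr (lam * x ^ (2 ^ t) * π (x + x ^ (2 ^ m))) + g (x + x ^ (2 ^ m))) ↔
      lam ∉ {y : GaloisField 2 n | y ^ (2 ^ m) = y} := by
  rcases Nat.eq_zero_or_pos m with hm0 | hm
  · subst hm0
    constructor
    · intro hb
      exfalso
      rcases hb 0 with h | h <;>
        · have he := BentAux.walsh_even
            (fun x => Tr (lam * x ^ (2 ^ t) * π (x + x ^ (2 ^ 0))) + g (x + x ^ (2 ^ 0))) 0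
          rw [h] at he
          norm_num at he
    · intro hmem
      exfalso
      exact hmem (by simp [Set.mem_setOf_eq])
  · exact BentAux.main hn (by omega) t π hπ g lam
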